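/- For all positive integers s, the maximum number T(s) of cyclic triangles over all tournaments on s vertices equals (s+1)s(s-1)/24 if s is odd and (s+2)s(s-2)/24 if s is even. -/

import Mathlib

/-- A tournament on `Fin n`: `r i j = true` means the edge is directed from `i` to `j`. -/
def IsTournament {n : ℕ} (r : Fin n → Fin n → Bool) : Prop :=
  (∀ i, r i i = false) ∧ ∀ i j : Fin n, i ≠ j → r i j = !r j i

open scoped Classical in
/-- The number of cyclic (directed) triangles of a tournament: the number of
3-element vertex sets whose three edges form a directed 3-cycle. -/
noncomputable def cycCount {n : ℕ} (r : Fin n → Fin n → Bool) : ℕ :=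
  (((Finset.univ : Finset (Fin n)).powersetCard 3).filter
    (fun t => ∃ a b c : Fin n, t = {a, b, c} ∧ r a b = true ∧ r b c = true ∧ r c a = true)).card

/-- The outdegree of vertex `i`. -/
def outdeg {n : ℕ} (r : Fin n → Fin n → Bool) (i : Fin n) : ℕ :=
  (Finset.univ.filter (fun j => r i j = true)).card


/-- The claimed formula for `T(s)`: `(s+1)s(s-1)/24` for odd `s`, `(s+2)s(s-2)/24` for even `s`. -/
def Tform (s : ℕ) : ℕ :=
  if s % 2 = 1 then (s + 1) * s * (s - 1) / 24 else (s + 2) * s * (s - 2) / 24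

/- ### Arithmetic helper lemmas -/

lemma two_mul_choose_two (n : ℕ) : 2 * (n+1).choose 2 = (n+1) * n := by
  induction n with
  | zero => rfl
  | succ n ih =>
    rw [show n+2 = (n+1)+1 from rfl, Nat.choose_succ_succ (n+1) 1, Nat.mul_add, ih,
      Nat.choose_one_right]
    ring

lemma six_mul_choose_three (n : ℕ) : 6 * (n+2).choose 3 = (n+2) * (n+1) * n := by
  induction n with
  | zero => rfl
  | succ n ih =>
    rw [show n+3 = (n+2)+1 from rfl, Nat.choose_succ_succ (n+2) 2, Nat.mul_add, ih,
      show (6:ℕ) = 3 * 2 from rfl, Nat.mul_assoc, two_mul_choose_two]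
    ring

lemma tangent_eq {d t : ℕ} (h : d = t ∨ d = t + 1) :
    d + 2 * t * d = d * d + (t * t + t) := by
  rcases h with rfl | rfl <;> ring

lemma tangent_le (d t : ℕ) : d + 2 * t * d ≤ d * d + (t * t + t) := by
  rcases le_or_gt d t with h | h
  · nlinarith
  · nlinarith

lemma Tform_odd (m : ℕ) : Tform (2*m+3) = (m+2).choose 3 + (m+3).choose 3 := by
  rw [Tform, if_pos (by omega : (2*m+3) % 2 = 1)]
  apply Nat.div_eq_of_eq_mul_left (by norm_num)
  have h1 := six_mul_choose_three m
  have h2 := six_mul_choose_three (m+1)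
  have : ((m+2).choose 3 + (m+3).choose 3) * 24
      = 4 * (6 * (m+2).choose 3) + 4 * (6 * ((m+1)+2).choose 3) := by ring_nf
  rw [this, h1, h2]
  have e : 2*m+3-1 = 2*m+2 := by omega
  rw [e]; ring
lemma Tform_even (m : ℕ) : Tform (2*m+2) = 2 * (m+2).choose 3 := by
  rw [Tform, if_neg (by omega : ¬ (2*m+2) % 2 = 1)]
  apply Nat.div_eq_of_eq_mul_left (by norm_num)
  have h1 := six_mul_choose_three m
  have : (2 * (m+2).choose 3) * 24 = 8 * (6 * (m+2).choose 3) := by ring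
  rw [this, h1]
  have e : 2*m+2-2 = 2*m := by omega
  rw [e]; ring

lemma choose2_eq (d : ℕ) : 2 * d.choose 2 + d = d * d := by
  cases d with
  | zero => rfl
  | succ d => rw [two_mul_choose_two]; ring

/- ### Tournament basics -/

lemma tour_asymm {n : ℕ} {r : Fin n → Fin n → Bool} (hr : IsTournament r) {i j : Fin n}
    (hij : i ≠ j) (h : r i j = true) : r j i = false := by
  have := hr.2 i j hij
  rw [h] at this
  simpa using this.symm

lemma tour_total {n : ℕ} {r : Fin n → Fin n → Bool} (hr : IsTournament r) {i j : Fin n}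
    (hij : i ≠ j) (h : r i j = false) : r j i = true := by
  have := hr.2 i j hij
  rw [h] at this
  simpa using this.symm

lemma sum_outdeg {n : ℕ} (r : Fin n → Fin n → Bool) (hr : IsTournament r) :
    2 * ∑ i, outdeg r i = n * (n - 1) := by
  classical
  have h1 : ∀ i : Fin n, outdeg r i = ∑ j, if r i j = true then 1 else 0 := by
    intro i; exact Finset.card_filter _ _
  have h2 : 2 * ∑ i, outdeg r i
      = ∑ i, ∑ j, ((if r i j = true then 1 else 0) + (if r j i = true then 1 else 0)) := by
    simp only [Finset.sum_add_distrib, h1, two_mul]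
    congr 1
    exact Finset.sum_comm
  rw [h2]
  have h3 : ∀ i j : Fin n,
      ((if r i j = true then 1 else 0) + (if r j i = true then 1 else 0)) =
        if i = j then 0 else 1 := by
    intro i j
    by_cases hij : i = j
    · subst hij; simp [hr.1 i]
    · cases h : r i j
      · rw [tour_total hr hij h]; simp [hij]
      · rw [tour_asymm hr hij h]; simp [hij]
  simp only [h3]
  have h4 : ∀ i : Fin n, (∑ j, if i = j then 0 else 1) = n - 1 := by
    intro i
    have : (∑ j : Fin n, if i = j then 0 else 1) = ∑ j : Fin n, if i ≠ j then 1 else 0 := by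
      apply Finset.sum_congr rfl; intro j _; by_cases h : i = j <;> simp [h]
    rw [this, ← Finset.card_filter, Finset.filter_ne,
      Finset.card_erase_of_mem (Finset.mem_univ i), Finset.card_univ, Fintype.card_fin]
  simp only [h4, Finset.sum_const, Finset.card_univ, Fintype.card_fin, smul_eq_mul]

lemma three_distinct {α : Type*} [DecidableEq α] {a b c : α}
    (h : ({a, b, c} : Finset α).card = 3) : a ≠ b ∧ a ≠ c ∧ b ≠ c := by
  refine ⟨?_, ?_, ?_⟩ <;> rintro rfl
  · have e : ({a, a, c} : Finset α) = {a, c} := by ext x; simp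
    rw [e] at h
    have := Finset.card_insert_le a ({c} : Finset α)
    simp at this; omega
  · have e : ({a, b, a} : Finset α) = {a, b} := by ext x; simp; tauto
    rw [e] at h
    have := Finset.card_insert_le a ({b} : Finset α)
    simp at this; omega
  · have e : ({a, b, b} : Finset α) = {a, b} := by ext x; simp
    rw [e] at h
    have := Finset.card_insert_le a ({b} : Finset α)
    simp at this; omega

lemma card_three {α : Type*} [DecidableEq α] {a b c : α} (hab : a ≠ b) (hac : a ≠ c)
    (hbc : b ≠ c) : ({a, b, c} : Finset α).card = 3 :=
  Finset.card_eq_three.mpr ⟨a, b, c, hab, hac, hbc, rfl⟩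

lemma cyc_iff {n : ℕ} (r : Fin n → Fin n → Bool) {a b c : Fin n}
    (hab : a ≠ b) (hac : a ≠ c) (hbc : b ≠ c) :
    (∃ a' b' c' : Fin n, ({a, b, c} : Finset (Fin n)) = {a', b', c'} ∧
        r a' b' = true ∧ r b' c' = true ∧ r c' a' = true) ↔
      ((r a b = true ∧ r b c = true ∧ r c a = true) ∨
        (r b a = true ∧ r a c = true ∧ r c b = true)) := by
  constructor
  · rintro ⟨a', b', c', ht, h1, h2, h3⟩
    have hc : ({a', b', c'} : Finset (Fin n)).card = 3 := by
      rw [← ht]; exact card_three hab hac hbc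
    obtain ⟨h1', h2', h3'⟩ := three_distinct hc
    have ma : a' ∈ ({a, b, c} : Finset (Fin n)) := by rw [ht]; simp
    have mb : b' ∈ ({a, b, c} : Finset (Fin n)) := by rw [ht]; simp
    have mc : c' ∈ ({a, b, c} : Finset (Fin n)) := by rw [ht]; simp
    simp only [Finset.mem_insert, Finset.mem_singleton] at ma mb mc
    rcases ma with rfl | rfl | rfl <;> rcases mb with rfl | rfl | rfl <;>
      rcases mc with rfl | rfl | rfl <;> tauto
  · rintro (⟨h1, h2, h3⟩ | ⟨h1, h2, h3⟩)
    · exact ⟨a, b, c, rfl, h1, h2, h3⟩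
    · refine ⟨b, a, c, ?_, h1, h2, h3⟩
      ext x; simp; tauto

/-- In a noncyclic triangle there is a dominating vertex. -/
lemma exists_dom {n : ℕ} {r : Fin n → Fin n → Bool} (hr : IsTournament r) {a b c : Fin n}
    (hab : a ≠ b) (hac : a ≠ c) (hbc : b ≠ c)
    (hnc : ¬ ∃ a' b' c' : Fin n, ({a, b, c} : Finset (Fin n)) = {a', b', c'} ∧
        r a' b' = true ∧ r b' c' = true ∧ r c' a' = true) :
    ∃ i ∈ ({a, b, c} : Finset (Fin n)), ∀ j ∈ ({a, b, c} : Finset (Fin n)),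
      j ≠ i → r i j = true := by
  rw [cyc_iff r hab hac hbc] at hnc
  push_neg at hnc
  have mem_iff : ∀ j : Fin n, j ∈ ({a, b, c} : Finset (Fin n)) ↔ (j = a ∨ j = b ∨ j = c) := by
    intro j; simp
  cases hx : r a b <;> cases hy : r b c <;> cases hz : r a c
  -- x = r a b, y = r b c, z = r a c
  · -- F F F : c dominates
    refine ⟨c, by simp, ?_⟩
    intro j hj hji
    rcases (mem_iff j).1 hj with rfl | rfl | rfl
    · exact tour_total hr hac hz
    · exact tour_total hr hbc hy
    · exact absurd rfl hji
  · -- F F T : cyclic (b a c): r b a, r a c, r c b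
    exfalso
    exact (hnc.2 (tour_total hr hab hx) hz) (tour_total hr hbc hy)
  · -- F T F : b dominates
    refine ⟨b, by simp, ?_⟩
    intro j hj hji
    rcases (mem_iff j).1 hj with rfl | rfl | rfl
    · exact tour_total hr hab hx
    · exact absurd rfl hji
    · exact hy
  · -- F T T : b dominates
    refine ⟨b, by simp, ?_⟩
    intro j hj hji
    rcases (mem_iff j).1 hj with rfl | rfl | rfl
    · exact tour_total hr hab hx
    · exact absurd rfl hji
    · exact hy
  · -- T F F : c dominates
    refine ⟨c, by simp, ?_⟩
    intro j hj hji
    rcases (mem_iff j).1 hj with rfl | rfl | rfl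
    · exact tour_total hr hac hz
    · exact tour_total hr hbc hy
    · exact absurd rfl hji
  · -- T F T : a dominates
    refine ⟨a, by simp, ?_⟩
    intro j hj hji
    rcases (mem_iff j).1 hj with rfl | rfl | rfl
    · exact absurd rfl hji
    · exact hx
    · exact hz
  · -- T T F : cyclic (a b c): r a b, r b c, r c a
    exfalso
    exact (hnc.1 hx hy) (tour_total hr hac hz)
  · -- T T T : a dominates
    refine ⟨a, by simp, ?_⟩
    intro j hj hji
    rcases (mem_iff j).1 hj with rfl | rfl | rfl
    · exact absurd rfl hji
    · exact hx
    · exact hz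

lemma dom_unique {n : ℕ} {r : Fin n → Fin n → Bool} (hr : IsTournament r)
    {t : Finset (Fin n)} {i i' : Fin n} (hi : i ∈ t) (hi' : i' ∈ t)
    (hdi : ∀ j ∈ t, j ≠ i → r i j = true) (hdi' : ∀ j ∈ t, j ≠ i' → r i' j = true) :
    i = i' := by
  by_contra hne
  have h1 := hdi i' hi' (Ne.symm hne)
  have h2 := hdi' i hi hne
  rw [tour_asymm hr hne h1] at h2
  exact Bool.false_ne_true h2

lemma cyc_identity {n : ℕ} (hn : 0 < n) (r : Fin n → Fin n → Bool) (hr : IsTournament r) :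
    cycCount r + ∑ i, (outdeg r i).choose 2 = n.choose 3 := by
  classical
  haveI : Nonempty (Fin n) := ⟨⟨0, hn⟩⟩
  set P : Finset (Fin n) → Prop := fun t =>
    ∃ a b c : Fin n, t = {a, b, c} ∧ r a b = true ∧ r b c = true ∧ r c a = true with hP
  -- dominating predicate
  set Dom : Finset (Fin n) → Fin n → Prop := fun t i =>
    i ∈ t ∧ ∀ j ∈ t, j ≠ i → r i j = true with hDom
  set domFn : Finset (Fin n) → Fin n := fun t =>
    if h : ∃ i, Dom t i then h.choose else Classical.arbitrary _ with hdomFn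
  have domFn_spec : ∀ t, (∃ i, Dom t i) → Dom t (domFn t) := by
    intro t h
    rw [hdomFn]
    simp only [dif_pos h]
    exact h.choose_spec
  -- key facts for elements of the noncyclic part
  have hNCfacts : ∀ t ∈ (Finset.univ.powersetCard 3).filter (fun t => ¬ P t),
      ∃ i, Dom t i := by
    intro t ht
    rw [Finset.mem_filter, Finset.mem_powersetCard_univ] at ht
    obtain ⟨a, b, c, hab, hac, hbc, rfl⟩ := Finset.card_eq_three.mp ht.1
    obtain ⟨i, hi, hdom⟩ := exists_dom hr hab hac hbc ht.2
    exact ⟨i, hi, hdom⟩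
  have main : ((Finset.univ.powersetCard 3).filter (fun t => ¬ P t)).card
      = ∑ i, (outdeg r i).choose 2 := by
    rw [Finset.card_eq_sum_card_fiberwise (f := domFn) (t := Finset.univ)
      (fun t _ => Finset.mem_univ _)]
    apply Finset.sum_congr rfl
    intro i _
    have : (outdeg r i).choose 2
        = ((Finset.univ.filter (fun j => r i j = true)).powersetCard 2).card := by
      rw [Finset.card_powersetCard]; rfl
    rw [this]
    apply Finset.card_bij' (fun t _ => t.erase i) (fun p _ => insert i p) ?hi ?hj ?li ?ri
    case hi =>
      intro t ht
      rw [Finset.mem_filter] at ht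
      obtain ⟨ht1, hd⟩ := ht
      have hdom : Dom t i := by
        have h := domFn_spec t (hNCfacts t ht1)
        rwa [hd] at h
      rw [Finset.mem_filter, Finset.mem_powersetCard_univ] at ht1
      rw [Finset.mem_powersetCard]
      constructor
      · intro j hj
        rw [Finset.mem_erase] at hj
        rw [Finset.mem_filter]
        exact ⟨Finset.mem_univ _, hdom.2 j hj.2 hj.1⟩
      · rw [Finset.card_erase_of_mem hdom.1, ht1.1]
    case hj =>
      intro p hp
      rw [Finset.mem_powersetCard] at hp
      obtain ⟨hsub, hcard⟩ := hp
      obtain ⟨b, c, hbc, rfl⟩ := Finset.card_eq_two.mp hcard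
      have hrb : r i b = true := by
        have := hsub (by simp : b ∈ ({b, c} : Finset (Fin n)))
        rw [Finset.mem_filter] at this; exact this.2
      have hrc : r i c = true := by
        have := hsub (by simp : c ∈ ({b, c} : Finset (Fin n)))
        rw [Finset.mem_filter] at this; exact this.2
      have hib : i ≠ b := by rintro rfl; rw [hr.1 i] at hrb; exact Bool.false_ne_true hrb
      have hic : i ≠ c := by rintro rfl; rw [hr.1 i] at hrc; exact Bool.false_ne_true hrc
      have hinotmem : i ∉ ({b, c} : Finset (Fin n)) := by simp [hib, hic]
      have hdomi : Dom (insert i {b, c}) i := by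
        refine ⟨Finset.mem_insert_self _ _, ?_⟩
        intro j hj hji
        rcases Finset.mem_insert.mp hj with rfl | hj'
        · exact absurd rfl hji
        · rcases Finset.mem_insert.mp hj' with rfl | hj''
          · exact hrb
          · rw [Finset.mem_singleton] at hj''; subst hj''; exact hrc
      have hmem3 : insert i ({b, c} : Finset (Fin n)) ∈ Finset.univ.powersetCard 3 := by
        rw [Finset.mem_powersetCard_univ, Finset.card_insert_of_notMem hinotmem, hcard]
      have hnotP : ¬ P (insert i ({b, c} : Finset (Fin n))) := by
        have heq : insert i ({b, c} : Finset (Fin n)) = ({i, b, c} : Finset (Fin n)) := rfl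
        rw [hP]
        simp only [heq]
        rw [cyc_iff r hib hic hbc]
        rintro (⟨h1, h2, h3⟩ | ⟨h1, h2, h3⟩)
        · rw [tour_asymm hr hic hrc] at h3; exact Bool.false_ne_true h3
        · rw [tour_asymm hr hib hrb] at h1; exact Bool.false_ne_true h1
      rw [Finset.mem_filter, Finset.mem_filter]
      refine ⟨⟨hmem3, hnotP⟩, ?_⟩
      have := domFn_spec _ ⟨i, hdomi⟩
      exact dom_unique hr this.1 hdomi.1 this.2 hdomi.2
    case li =>
      intro t ht
      rw [Finset.mem_filter] at ht
      have hdom : Dom t i := by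
        have h := domFn_spec t (hNCfacts t ht.1)
        rwa [ht.2] at h
      exact Finset.insert_erase hdom.1
    case ri =>
      intro p hp
      rw [Finset.mem_powersetCard] at hp
      have : i ∉ p := by
        intro hip
        have := hp.1 hip
        rw [Finset.mem_filter] at this
        rw [hr.1 i] at this
        exact Bool.false_ne_true this.2
      exact Finset.erase_insert this
  have split : ((Finset.univ.powersetCard 3).filter P).card
      + ((Finset.univ.powersetCard 3).filter (fun t => ¬ P t)).card
      = ((Finset.univ : Finset (Fin n)).powersetCard 3).card :=
    Finset.card_filter_add_card_filter_not P
  rw [Finset.card_powersetCard, Finset.card_univ, Fintype.card_fin] at split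
  have hcyc : cycCount r = ((Finset.univ.powersetCard 3).filter P).card := by
    rw [cycCount]
  rw [hcyc, main] at *
  omega

/- ### The extremal tournament -/

def myT (s : ℕ) : Fin s → Fin s → Bool := fun i j =>
  if ((i : ℕ) + j) % 2 = 0 then decide ((i : ℕ) < j) else decide ((j : ℕ) < i)

lemma myT_tournament (s : ℕ) : IsTournament (myT s) := by
  constructor
  · intro i; simp [myT]
  · intro i j hij
    have hne : (i : ℕ) ≠ (j : ℕ) := fun h => hij (Fin.ext h)
    unfold myT
    rcases Nat.lt_or_ge (i : ℕ) (j : ℕ) with h | h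
    · have h2 : ¬ ((j : ℕ) < i) := by omega
      by_cases hp : ((i : ℕ) + j) % 2 = 0
      · have hp' : ((j : ℕ) + i) % 2 = 0 := by omega
        simp [hp, hp', h, h2]
      · have hp' : ¬ (((j : ℕ) + i) % 2 = 0) := by omega
        simp [hp, hp', h, h2]
    · have h1 : ¬ ((i : ℕ) < j) := by omega
      have h2 : (j : ℕ) < i := by omega
      by_cases hp : ((i : ℕ) + j) % 2 = 0
      · have hp' : ((j : ℕ) + i) % 2 = 0 := by omega
        simp [hp, hp', h1, h2]
      · have hp' : ¬ (((j : ℕ) + i) % 2 = 0) := by omega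
        simp [hp, hp', h1, h2]

lemma cnt0 (k n : ℕ) :
    ((Finset.range n).filter (fun j => (k + j) % 2 = 0)).card = (n + (k + 1) % 2) / 2 := by
  induction n with
  | zero => simp
  | succ n ih =>
    rw [Finset.range_add_one, Finset.filter_insert]
    by_cases h : (k + n) % 2 = 0
    · rw [if_pos h, Finset.card_insert_of_notMem (by simp), ih]
      omega
    · rw [if_neg h, ih]
      omega

lemma cnt1 (k n : ℕ) :
    ((Finset.range n).filter (fun j => (k + j) % 2 = 1)).card = (n + k % 2) / 2 := by
  have : ((Finset.range n).filter (fun j => (k + j) % 2 = 1))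
      = ((Finset.range n).filter (fun j => (k + 1 + j) % 2 = 0)) := by
    apply Finset.filter_congr; intro j _; constructor <;> intro h <;> omega
  rw [this, cnt0]
  omega

lemma cnt0' (k a b : ℕ) (hab : a ≤ b) :
    ((Finset.Ico a b).filter (fun j => (k + j) % 2 = 0)).card
      = (b + (k + 1) % 2) / 2 - (a + (k + 1) % 2) / 2 := by
  have hsplit : (Finset.range b) = (Finset.range a) ∪ Finset.Ico a b := by
    rw [Finset.range_eq_Ico, Finset.range_eq_Ico]
    exact (Finset.Ico_union_Ico_eq_Ico (Nat.zero_le a) hab).symm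
  have hdisj : Disjoint ((Finset.range a).filter (fun j => (k + j) % 2 = 0))
      ((Finset.Ico a b).filter (fun j => (k + j) % 2 = 0)) := by
    apply Finset.disjoint_filter_filter
    rw [Finset.range_eq_Ico]
    exact Finset.Ico_disjoint_Ico_consecutive 0 a b
  have := cnt0 k b
  rw [hsplit, Finset.filter_union, Finset.card_union_of_disjoint hdisj, cnt0 k a] at this
  omega
lemma outdeg_myT (s : ℕ) (i : Fin s) :
    outdeg (myT s) i = (s - 1) / 2 ∨ outdeg (myT s) i = (s - 1) / 2 + 1 := by
  classical
  have hi : (i : ℕ) < s := i.2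
  have hfun : ∀ j : Fin s, (if myT s i j = true then (1:ℕ) else 0)
      = (if (((i:ℕ) + (j:ℕ)) % 2 = 1 ∧ (j:ℕ) < (i:ℕ))
          ∨ (((i:ℕ) + (j:ℕ)) % 2 = 0 ∧ (i:ℕ) < (j:ℕ)) then 1 else 0) := by
    intro j
    by_cases hp : ((i : ℕ) + (j:ℕ)) % 2 = 0
    · by_cases hlt : (i : ℕ) < (j:ℕ)
      · have hm : myT s i j = true := by simp [myT, hp, hlt]
        rw [hm, if_pos (Or.inr ⟨hp, hlt⟩)]; rfl
      · have hm : myT s i j = false := by simp [myT, hp]; omega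
        have hcond : ¬((((i:ℕ) + (j:ℕ)) % 2 = 1 ∧ (j:ℕ) < (i:ℕ))
            ∨ (((i:ℕ) + (j:ℕ)) % 2 = 0 ∧ (i:ℕ) < (j:ℕ))) := by
          rintro (⟨h1, h2⟩ | ⟨h1, h2⟩) <;> omega
        rw [hm, if_neg hcond]; rfl
    · by_cases hlt : (j : ℕ) < (i:ℕ)
      · have hm : myT s i j = true := by simp [myT, hp, hlt]
        rw [hm, if_pos (Or.inl ⟨by omega, hlt⟩)]; rfl
      · have hm : myT s i j = false := by simp [myT, hp]; omega
        have hcond : ¬((((i:ℕ) + (j:ℕ)) % 2 = 1 ∧ (j:ℕ) < (i:ℕ))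
            ∨ (((i:ℕ) + (j:ℕ)) % 2 = 0 ∧ (i:ℕ) < (j:ℕ))) := by
          rintro (⟨h1, h2⟩ | ⟨h1, h2⟩) <;> omega
        rw [hm, if_neg hcond]; rfl
  have hcard : outdeg (myT s) i
      = ((Finset.range s).filter
          (fun j => ((i : ℕ) + j) % 2 = 1 ∧ j < (i : ℕ))).card
      + ((Finset.range s).filter
          (fun j => ((i : ℕ) + j) % 2 = 0 ∧ (i : ℕ) < j)).card := by
    rw [outdeg, Finset.card_filter]
    simp only [hfun]
    rw [Fin.sum_univ_eq_sum_range
      (fun j => if (((i:ℕ) + j) % 2 = 1 ∧ j < (i:ℕ)) ∨ (((i:ℕ) + j) % 2 = 0 ∧ (i:ℕ) < j)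
        then (1:ℕ) else 0) s]
    rw [← Finset.card_filter, Finset.filter_or]
    apply Finset.card_union_of_disjoint
    rw [Finset.disjoint_left]
    intro j hj hj2
    simp only [Finset.mem_filter] at hj hj2
    omega
  have e1 : ((Finset.range s).filter (fun j => ((i : ℕ) + j) % 2 = 1 ∧ j < (i : ℕ)))
      = ((Finset.range (i : ℕ)).filter (fun j => ((i : ℕ) + j) % 2 = 1)) := by
    ext j
    simp only [Finset.mem_filter, Finset.mem_range]
    omega
  have e2 : ((Finset.range s).filter (fun j => ((i : ℕ) + j) % 2 = 0 ∧ (i : ℕ) < j))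
      = ((Finset.Ico ((i : ℕ) + 1) s).filter (fun j => ((i : ℕ) + j) % 2 = 0)) := by
    ext j
    simp only [Finset.mem_filter, Finset.mem_range, Finset.mem_Ico]
    omega
  rw [e1, e2, cnt1, cnt0' _ _ _ (by omega)] at hcard
  omega

section Master

variable {n : ℕ} (r : Fin n → Fin n → Bool)

lemma sum_sq (hr : IsTournament r) :
    2 * (∑ i, (outdeg r i).choose 2) + (∑ i, outdeg r i)
      = ∑ i : Fin n, outdeg r i * outdeg r i := by
  rw [Finset.mul_sum, ← Finset.sum_add_distrib]
  exact Finset.sum_congr rfl (fun i _ => choose2_eq _)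

lemma master_le (hn : 0 < n) (hr : IsTournament r) :
    ∃ A D : ℕ, cycCount r + A = n.choose 3 ∧ 2 * D = n * (n - 1) ∧
      2 * ((n-1)/2) * D ≤ 2 * A + n * ((n-1)/2 * ((n-1)/2) + (n-1)/2) := by
  refine ⟨∑ i, (outdeg r i).choose 2, ∑ i, outdeg r i,
    cyc_identity hn r hr, sum_outdeg r hr, ?_⟩
  set t := (n-1)/2
  have h : (∑ i, outdeg r i) + 2 * t * (∑ i, outdeg r i)
      ≤ (∑ i : Fin n, outdeg r i * outdeg r i) + n * (t * t + t) := by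
    calc (∑ i, outdeg r i) + 2 * t * (∑ i, outdeg r i)
        = ∑ i : Fin n, (outdeg r i + 2 * t * outdeg r i) := by
          rw [Finset.mul_sum, Finset.sum_add_distrib]
      _ ≤ ∑ i : Fin n, (outdeg r i * outdeg r i + (t * t + t)) :=
          Finset.sum_le_sum (fun i _ => tangent_le _ _)
      _ = (∑ i : Fin n, outdeg r i * outdeg r i) + n * (t * t + t) := by
          rw [Finset.sum_add_distrib, Finset.sum_const, Finset.card_univ,
            Fintype.card_fin, smul_eq_mul]
  rw [← sum_sq r hr] at h
  linarith

lemma master_eq (s : ℕ) (hs : 0 < s) :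
    ∃ A D : ℕ, cycCount (myT s) + A = s.choose 3 ∧ 2 * D = s * (s - 1) ∧
      2 * ((s-1)/2) * D = 2 * A + s * ((s-1)/2 * ((s-1)/2) + (s-1)/2) := by
  refine ⟨∑ i, (outdeg (myT s) i).choose 2, ∑ i, outdeg (myT s) i,
    cyc_identity hs _ (myT_tournament s), sum_outdeg _ (myT_tournament s), ?_⟩
  set t := (s-1)/2
  have h : (∑ i, outdeg (myT s) i) + 2 * t * (∑ i, outdeg (myT s) i)
      = (∑ i : Fin s, outdeg (myT s) i * outdeg (myT s) i) + s * (t * t + t) := by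
    calc (∑ i, outdeg (myT s) i) + 2 * t * (∑ i, outdeg (myT s) i)
        = ∑ i : Fin s, (outdeg (myT s) i + 2 * t * outdeg (myT s) i) := by
          rw [Finset.mul_sum, Finset.sum_add_distrib]
      _ = ∑ i : Fin s, (outdeg (myT s) i * outdeg (myT s) i + (t * t + t)) :=
          Finset.sum_congr rfl (fun i _ => tangent_eq (outdeg_myT s i))
      _ = (∑ i : Fin s, outdeg (myT s) i * outdeg (myT s) i) + s * (t * t + t) := by
          rw [Finset.sum_add_distrib, Finset.sum_const, Finset.card_univ,
            Fintype.card_fin, smul_eq_mul]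
  rw [← sum_sq _ (myT_tournament s)] at h
  linarith

end Master

/-- For every positive integer `s`, the maximum number of cyclic triangles over all
tournaments on `s` vertices is `(s+1)s(s-1)/24` if `s` is odd and `(s+2)s(s-2)/24`
if `s` is even. -/
theorem max_cycCount (s : ℕ) (hs : 0 < s) :
    IsGreatest {c : ℕ | ∃ r : Fin s → Fin s → Bool, IsTournament r ∧ cycCount r = c}
      (Tform s) := by
  have hsplit : s = 1 ∨ (∃ m, s = 2*m+2) ∨ (∃ m, s = 2*m+3) := by
    rcases Nat.even_or_odd s with ⟨m, hm⟩ | ⟨m, hm⟩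
    · right; left; exact ⟨m - 1, by omega⟩
    · rcases Nat.lt_or_ge s 2 with h | h
      · left; omega
      · right; right; exact ⟨m - 1, by omega⟩
  constructor
  · -- membership
    refine ⟨myT s, myT_tournament s, ?_⟩
    obtain ⟨A, D, h1, h2, h3⟩ := master_eq s hs
    rcases hsplit with rfl | ⟨m, rfl⟩ | ⟨m, rfl⟩
    · have : Nat.choose 1 3 = 0 := by decide
      rw [this] at h1
      have : Tform 1 = 0 := by norm_num [Tform]
      omega
    · -- even s = 2m+2
      have ht : (2*m+2-1)/2 = m := by omega
      rw [ht] at h3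
      have hDval : D = (m+1) * (2*m+1) := by
        apply Nat.eq_of_mul_eq_mul_left (show 0 < 2 by norm_num)
        rw [h2]; have e : 2*m+2-1 = 2*m+1 := by omega
        rw [e]; ring
      rw [hDval] at h3
      have hC3 : 6 * (2*m+2).choose 3 = (2*m+2) * (2*m+1) * (2*m) :=
        six_mul_choose_three (2*m)
      have hc := six_mul_choose_three m
      rw [Tform_even m]
      have h6 : 6 * cycCount (myT (2*m+2)) = 12 * (m+2).choose 3 := by nlinarith
      omega
    · -- odd s = 2m+3
      have ht : (2*m+3-1)/2 = m+1 := by omega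
      rw [ht] at h3
      have hDval : D = (2*m+3) * (m+1) := by
        apply Nat.eq_of_mul_eq_mul_left (show 0 < 2 by norm_num)
        rw [h2]; have e : 2*m+3-1 = 2*m+2 := by omega
        rw [e]; ring
      rw [hDval] at h3
      have hC3 : 6 * (2*m+3).choose 3 = (2*m+3) * (2*m+2) * (2*m+1) := by
        simpa [show 2*m+1+2 = 2*m+3 from by omega, show 2*m+1+1 = 2*m+2 from by omega]
          using six_mul_choose_three (2*m+1)
      have hc1 := six_mul_choose_three m
      have hc2 : 6 * (m+3).choose 3 = (m+3) * (m+2) * (m+1) := by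
        simpa [show m+1+2 = m+3 from by omega, show m+1+1 = m+2 from by omega]
          using six_mul_choose_three (m+1)
      rw [Tform_odd m]
      have h6 : 6 * cycCount (myT (2*m+3))
          = 6 * (m+2).choose 3 + 6 * (m+3).choose 3 := by nlinarith
      omega
  · -- upper bound
    rintro c ⟨r, hr, rfl⟩
    obtain ⟨A, D, h1, h2, h3⟩ := master_le r hs hr
    rcases hsplit with rfl | ⟨m, rfl⟩ | ⟨m, rfl⟩
    · have : Nat.choose 1 3 = 0 := by decide
      rw [this] at h1
      omega
    · have ht : (2*m+2-1)/2 = m := by omega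
      rw [ht] at h3
      have hDval : D = (m+1) * (2*m+1) := by
        apply Nat.eq_of_mul_eq_mul_left (show 0 < 2 by norm_num)
        rw [h2]; have e : 2*m+2-1 = 2*m+1 := by omega
        rw [e]; ring
      rw [hDval] at h3
      have hC3 : 6 * (2*m+2).choose 3 = (2*m+2) * (2*m+1) * (2*m) :=
        six_mul_choose_three (2*m)
      have hc := six_mul_choose_three m
      rw [Tform_even m]
      have h6 : 6 * cycCount r ≤ 12 * (m+2).choose 3 := by nlinarith
      omega
    · have ht : (2*m+3-1)/2 = m+1 := by omega
      rw [ht] at h3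
      have hDval : D = (2*m+3) * (m+1) := by
        apply Nat.eq_of_mul_eq_mul_left (show 0 < 2 by norm_num)
        rw [h2]; have e : 2*m+3-1 = 2*m+2 := by omega
        rw [e]; ring
      rw [hDval] at h3
      have hC3 : 6 * (2*m+3).choose 3 = (2*m+3) * (2*m+2) * (2*m+1) := by
        simpa [show 2*m+1+2 = 2*m+3 from by omega, show 2*m+1+1 = 2*m+2 from by omega]
          using six_mul_choose_three (2*m+1)
      have hc1 := six_mul_choose_three m
      have hc2 : 6 * (m+3).choose 3 = (m+3) * (m+2) * (m+1) := by
        simpa [show m+1+2 = m+3 from by omega, show m+1+1 = m+2 from by omega]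
          using six_mul_choose_three (m+1)
      rw [Tform_odd m]
      have h6 : 6 * cycCount r ≤ 6 * (m+2).choose 3 + 6 * (m+3).choose 3 := by nlinarith
      omega
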